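/- Let 0 < x₁ < x₂ < 1 and define h₁(y) = x₁·y·(1 − log y) and h₂(y) = x₂·y·(1 − log y) for y ∈ (0,1]. Then the (improper/Lebesgue) integral over (0,1) of G(y) = (h₁(y)/x₁)·y·h₁'(y) + ((h₂(y) − h₁(y))/(x₂ − x₁))·y·(h₂'(y) − h₁'(y)) + ((y − h₂(y))/(1 − x₂))·y·(1 − h₂'(y)) equals 1/3 − x₂/(27(1 − x₂)). In particular, this value is strictly smaller than 1/3, the value of the same integral obtained when h₁(y) = x₁·y and h₂(y) = x₂·y (in which case G(y) = y²). -/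

import Mathlib

open Set Real MeasureTheory Filter

lemma tendstoAux (n m : ℕ) (hn : 0 < n) (hm : 0 < m) :
    Tendsto (fun y : ℝ => y ^ n * log y ^ m) (nhdsWithin 0 (Ioi 0)) (nhds 0) := by
  have hr : (0:ℝ) < (n:ℝ)/(m:ℝ) := by positivity
  have h := (tendsto_log_mul_rpow_nhdsGT_zero hr).pow m
  rw [zero_pow hm.ne'] at h
  refine h.congr' ?_
  filter_upwards [self_mem_nhdsWithin] with y (hy : 0 < y)
  rw [mul_pow, ← Real.rpow_natCast (y ^ ((n:ℝ)/m)) m, ← Real.rpow_mul hy.le,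
    div_mul_cancel₀, Real.rpow_natCast, mul_comm]
  exact_mod_cast Nat.cast_ne_zero.mpr hm.ne'

lemma contAux (n m : ℕ) (hn : 0 < n) (hm : 0 < m) :
    ContinuousOn (fun y : ℝ => y ^ n * log y ^ m) (Icc (0:ℝ) 1) := by
  intro x hx
  rcases eq_or_ne x 0 with rfl | hx0
  · rw [← continuousWithinAt_diff_self]
    have hsub : Icc (0:ℝ) 1 \ {0} ⊆ Ioi 0 := by
      rintro y ⟨⟨hy0, _⟩, hy1⟩
      exact lt_of_le_of_ne hy0 (Ne.symm hy1)
    have hval : (fun y : ℝ => y ^ n * log y ^ m) 0 = 0 := by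
      simp [zero_pow hn.ne']
    have : ContinuousWithinAt (fun y : ℝ => y ^ n * log y ^ m) (Ioi 0) 0 := by
      rw [ContinuousWithinAt]
      have h0 : (0:ℝ) ^ n * log 0 ^ m = 0 := by simp [zero_pow hn.ne']
      rw [h0]
      exact tendstoAux n m hn hm
    exact this.mono hsub
  · exact ((continuousAt_pow _ _).mul ((Real.continuousAt_log hx0).pow m)).continuousWithinAt

lemma key (c : ℝ) :
    (∫ y in Ioo (0:ℝ) 1, (y^2 + c * (y^2 * log y + y^2 * log y ^ 2)))
      = 1/3 - c/27 := by
  rw [← MeasureTheory.integral_Ioc_eq_integral_Ioo,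
    ← intervalIntegral.integral_of_le (by norm_num : (0:ℝ) ≤ 1)]
  have hF : ∀ x ∈ Ioo (0:ℝ) 1, HasDerivAt
      (fun y : ℝ => y^3/3 + c * (y^3 * log y ^ 2/3 + y^3 * log y/9 - y^3/27))
      (x^2 + c * (x^2 * log x + x^2 * log x ^ 2)) x := by
    intro x hx
    have hx0 : x ≠ 0 := ne_of_gt hx.1
    have hl : HasDerivAt log x⁻¹ x := Real.hasDerivAt_log hx0
    have h3 : HasDerivAt (fun y : ℝ => y^3) (3*x^2) x := by
      simpa using hasDerivAt_pow 3 x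
    have hl2 : HasDerivAt (fun y => log y ^ 2) (2 * log x * x⁻¹) x := by
      exact (hl.pow 2).congr_deriv (by simp)
    have := (((h3.div_const 3).add
      ((((h3.mul hl2).div_const 3).add ((h3.mul hl).div_const 9)).sub
        (h3.div_const 27) |>.const_mul c)))
    refine this.congr_deriv ?_
    field_simp
    ring
  have hcont : ContinuousOn
      (fun y : ℝ => y^3/3 + c * (y^3 * log y ^ 2/3 + y^3 * log y/9 - y^3/27))
      (Icc (0:ℝ) 1) := by
    have c32 := contAux 3 2 (by norm_num) (by norm_num)
    have c31 := contAux 3 1 (by norm_num) (by norm_num)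
    simp only [pow_one] at c31
    exact ((continuous_pow 3).continuousOn.div_const 3).add
      (continuousOn_const.mul (((c32.div_const 3).add (c31.div_const 9)).sub
        ((continuous_pow 3).continuousOn.div_const 27)))
  have hint : IntervalIntegrable
      (fun y : ℝ => y^2 + c * (y^2 * log y + y^2 * log y ^ 2)) volume 0 1 := by
    apply ContinuousOn.intervalIntegrable
    rw [uIcc_of_le (by norm_num : (0:ℝ) ≤ 1)]
    have c21 := contAux 2 1 (by norm_num) (by norm_num)
    have c22 := contAux 2 2 (by norm_num) (by norm_num)
    simp only [pow_one] at c21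
    exact (continuous_pow 2).continuousOn.add (continuousOn_const.mul (c21.add c22))
  rw [intervalIntegral.integral_eq_sub_of_hasDerivAt_of_le (by norm_num) hcont hF hint]
  simp [Real.log_one]
  ring

theorem stmt10 (x₁ x₂ : ℝ) (hx₁ : 0 < x₁) (hx₁₂ : x₁ < x₂) (hx₂ : x₂ < 1) :
    (∫ y in Ioo (0:ℝ) 1,
      ((x₁ * y * (1 - log y)) / x₁) * y * (-x₁ * log y) +
      ((x₂ * y * (1 - log y) - x₁ * y * (1 - log y)) / (x₂ - x₁)) * y *
        ((-x₂ * log y) - (-x₁ * log y)) +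
      ((y - x₂ * y * (1 - log y)) / (1 - x₂)) * y * (1 - (-x₂ * log y)))
      = 1 / 3 - x₂ / (27 * (1 - x₂)) ∧
    (∫ y in Ioo (0:ℝ) 1,
      ((x₁ * y) / x₁) * y * x₁ +
      ((x₂ * y - x₁ * y) / (x₂ - x₁)) * y * (x₂ - x₁) +
      ((y - x₂ * y) / (1 - x₂)) * y * (1 - x₂)) = 1 / 3 ∧
    (∀ y ∈ Ioo (0:ℝ) 1,
      ((x₁ * y) / x₁) * y * x₁ +
      ((x₂ * y - x₁ * y) / (x₂ - x₁)) * y * (x₂ - x₁) +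
      ((y - x₂ * y) / (1 - x₂)) * y * (1 - x₂) = y ^ 2) ∧
    1 / 3 - x₂ / (27 * (1 - x₂)) < 1 / 3 := by
  have h10 : x₁ ≠ 0 := ne_of_gt hx₁
  have h21 : x₂ - x₁ ≠ 0 := ne_of_gt (by linarith)
  have h12 : 1 - x₂ ≠ 0 := ne_of_gt (by linarith)
  have h12' : (0:ℝ) < 1 - x₂ := by linarith
  set c := x₂ / (1 - x₂) with hc
  refine ⟨?_, ?_, ?_, ?_⟩
  · have heq : ∀ y ∈ Ioo (0:ℝ) 1,
        ((x₁ * y * (1 - log y)) / x₁) * y * (-x₁ * log y) +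
        ((x₂ * y * (1 - log y) - x₁ * y * (1 - log y)) / (x₂ - x₁)) * y *
          ((-x₂ * log y) - (-x₁ * log y)) +
        ((y - x₂ * y * (1 - log y)) / (1 - x₂)) * y * (1 - (-x₂ * log y)) =
        y^2 + c * (y^2 * log y + y^2 * log y ^ 2) := by
      intro y hy
      rw [hc]
      field_simp
      ring
    rw [MeasureTheory.setIntegral_congr_fun measurableSet_Ioo heq, key]
    rw [hc]
    field_simp
  · have heq : ∀ y ∈ Ioo (0:ℝ) 1,
        ((x₁ * y) / x₁) * y * x₁ + ((x₂ * y - x₁ * y) / (x₂ - x₁)) * y * (x₂ - x₁) +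
        ((y - x₂ * y) / (1 - x₂)) * y * (1 - x₂) =
        y^2 + (0:ℝ) * (y^2 * log y + y^2 * log y ^ 2) := by
      intro y hy
      field_simp
      ring
    rw [MeasureTheory.setIntegral_congr_fun measurableSet_Ioo heq, key]
    norm_num
  · intro y hy
    field_simp
    ring
  · have hx2 : 0 < x₂ := hx₁.trans hx₁₂
    have : 0 < x₂ / (27 * (1 - x₂)) := div_pos hx2 (by nlinarith)
    linarith
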